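/- Let θ be a CPWL function and let x̄, v̄, Ψ, Λ(x̄) be as in the variational-system setting with v̄ ∈ Λ(x̄). Then v̄ is a critical multiplier if and only if there exists a pair (ξ,η) ∈ ℝ^n × ℝ^m with ξ ≠ 0 such that ∇ₓΨ(x̄,v̄)ξ + ∇Φ(x̄)*η = 0, ⟨η, ∇Φ(x̄)ξ⟩ = 0, ∇Φ(x̄)ξ ∈ 𝒦(z̄,v̄), and η ∈ 𝒦(z̄,v̄)*. -/

import Mathlib

open Filter Topology Set RealInnerProductSpace

noncomputable section

abbrev Ev (k : ℕ) := EuclideanSpace ℝ (Fin k)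

/-- The Bouligand–Severi tangent cone to a set `s` at `x`. -/
def tcone {E : Type*} [NormedAddCommGroup E] [NormedSpace ℝ E] (s : Set E) (x : E) : Set E :=
  {w | ∃ (z : ℕ → E) (c : ℕ → ℝ), (∀ k, z k ∈ s) ∧ (∀ k, 0 ≤ c k) ∧
      Tendsto z atTop (𝓝 x) ∧ Tendsto (fun k => c k • (z k - x)) atTop (𝓝 w)}

/-- The data of a convex piecewise linear (CPWL) extended-real-valued function on `ℝ^m`:
`θ(z) = max_i (⟨a i, z⟩ - al i)` on the polyhedron `dom θ = {z | ⟨d i, z⟩ ≤ be i ∀ i}`,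
and `θ(z) = +∞` outside of it. -/
structure CPWL (m : ℕ) where
  l : ℕ
  p : ℕ
  hl : 0 < l
  a : Fin l → Ev m
  al : Fin l → ℝ
  d : Fin p → Ev m
  be : Fin p → ℝ
  dom_nonempty : ∃ z : Ev m, ∀ i, ⟪d i, z⟫ ≤ be i

namespace CPWL

variable {m : ℕ} (θ : CPWL m)

/-- The (polyhedral) domain of the CPWL function. -/
def dom : Set (Ev m) := {z | ∀ i, ⟪θ.d i, z⟫ ≤ θ.be i}

/-- The real value `max_i (⟨a i, z⟩ - al i)` of the CPWL function (meaningful on its domain). -/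
def val (z : Ev m) : ℝ := ⨆ i : Fin θ.l, (⟪θ.a i, z⟫ - θ.al i)

/-- The CPWL function as an extended-real-valued function. -/
def eval (z : Ev m) : EReal :=
  @ite _ (z ∈ θ.dom) (Classical.propDecidable _) ((θ.val z : ℝ) : EReal) ⊤

/-- The subdifferential (of convex analysis) of the CPWL function. -/
def subdiff (z : Ev m) : Set (Ev m) :=
  {v | z ∈ θ.dom ∧ ∀ z' ∈ θ.dom, ⟪v, z' - z⟫ ≤ θ.val z' - θ.val z}

/-- Active indices `K(z)` of the max-representation. -/
def Kact (z : Ev m) : Set (Fin θ.l) := {i | θ.val z = ⟪θ.a i, z⟫ - θ.al i}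

/-- Active indices `I(z)` of the domain constraints. -/
def Iact (z : Ev m) : Set (Fin θ.p) := {i | ⟪θ.d i, z⟫ = θ.be i}

/-- The critical cone `𝒦(z̄,v̄) = {w ∈ T(z̄; dom θ) : ⟨v̄,w⟩ = θ′(z̄;w)}`. -/
def crit (zb vb : Ev m) : Set (Ev m) :=
  {w | w ∈ tcone θ.dom zb ∧
    Tendsto (fun t : ℝ => (θ.val (zb + t • w) - θ.val zb) / t) (𝓝[>] (0 : ℝ))
      (𝓝 ⟪vb, w⟫)}

/-- The graph of the subdifferential mapping. -/
def gph : Set (Ev m × Ev m) := {zv | zv.2 ∈ θ.subdiff zv.1}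

/-- The graphical derivative `(D∂θ)(z̄,v̄)(u)`. -/
def Dsub (zb vb u : Ev m) : Set (Ev m) := {w | (u, w) ∈ tcone θ.gph (zb, vb)}

/-- The regular coderivative `(D̂*∂θ)(z̄,v̄)(u)`. -/
def Dhat (zb vb u : Ev m) : Set (Ev m) :=
  {w | ∀ h ∈ tcone θ.gph (zb, vb), ⟪w, h.1⟫ - ⟪u, h.2⟫ ≤ 0}

end CPWL

section VarSys

variable {n m : ℕ}

/-- The adjoint `∇Φ(x)*` of the Jacobian of `Φ` at `x`. -/
def adjD (Φ : Ev n → Ev m) (x : Ev n) : Ev m →L[ℝ] Ev n :=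
  ContinuousLinearMap.adjoint (fderiv ℝ Φ x)

/-- `Ψ(x,v) = f(x) + ∇Φ(x)* v`. -/
def Psi (f : Ev n → Ev n) (Φ : Ev n → Ev m) (x : Ev n) (v : Ev m) : Ev n :=
  f x + adjD Φ x v

/-- The partial Jacobian `∇ₓΨ(x̄,v̄)`. -/
def gradxPsi (f : Ev n → Ev n) (Φ : Ev n → Ev m) (xb : Ev n) (vb : Ev m) :
    Ev n →L[ℝ] Ev n :=
  fderiv ℝ (fun x => Psi f Φ x vb) xb

/-- The Lagrange multiplier set `Λ(x̄)` of the variational system. -/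
def Lam (f : Ev n → Ev n) (Φ : Ev n → Ev m) (θ : CPWL m) (xb : Ev n) : Set (Ev m) :=
  {v | Psi f Φ xb v = 0 ∧ v ∈ θ.subdiff (Φ xb)}

/-- `v̄` is a critical multiplier for the variational system. -/
def IsCritical (f : Ev n → Ev n) (Φ : Ev n → Ev m) (θ : CPWL m) (xb : Ev n) (vb : Ev m) :
    Prop :=
  ∃ ξ : Ev n, ξ ≠ 0 ∧ ∃ w ∈ θ.Dsub (Φ xb) vb (fderiv ℝ Φ xb ξ),
    gradxPsi f Φ xb vb ξ + adjD Φ xb w = 0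

/-- The solution map of the canonically perturbed variational system. -/
def Smap (f : Ev n → Ev n) (Φ : Ev n → Ev m) (θ : CPWL m) (p₁ : Ev n) (p₂ : Ev m) :
    Set (Ev n × Ev m) :=
  {xv | Psi f Φ xv.1 xv.2 = p₁ ∧ xv.2 ∈ θ.subdiff (Φ xv.1 + p₂)}

end VarSys

section General

variable {n m : ℕ}

/-- The subdifferential of a general extended-real-valued function. -/
def subdiffE (θ : Ev m → EReal) (z : Ev m) : Set (Ev m) :=
  {v | ∀ z', ((⟪v, z' - z⟫ : ℝ) : EReal) ≤ θ z' - θ z}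

/-- The graph of the subdifferential of a general extended-real-valued function. -/
def gphE (θ : Ev m → EReal) : Set (Ev m × Ev m) := {zv | zv.2 ∈ subdiffE θ zv.1}

/-- The graphical derivative of the subdifferential, general case. -/
def DsubE (θ : Ev m → EReal) (zb vb u : Ev m) : Set (Ev m) :=
  {w | (u, w) ∈ tcone (gphE θ) (zb, vb)}

/-- The Lagrange multiplier set, general case. -/
def LamE (f : Ev n → Ev n) (Φ : Ev n → Ev m) (θ : Ev m → EReal) (xb : Ev n) :
    Set (Ev m) :=
  {v | Psi f Φ xb v = 0 ∧ v ∈ subdiffE θ (Φ xb)}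

/-- The solution map of the canonically perturbed variational system, general case. -/
def SmapE (f : Ev n → Ev n) (Φ : Ev n → Ev m) (θ : Ev m → EReal) (p₁ : Ev n)
    (p₂ : Ev m) : Set (Ev n × Ev m) :=
  {xv | Psi f Φ xv.1 xv.2 = p₁ ∧ xv.2 ∈ subdiffE θ (Φ xv.1 + p₂)}

end General

section Composite

variable {n m : ℕ}

/-- The gradient `∇ₓL(·,v)` of the Lagrangian `L(x,v) = φ₀(x) + ⟨Φ(x),v⟩`. -/
def gradL (φ₀ : Ev n → ℝ) (Φ : Ev n → Ev m) (v : Ev m) (x : Ev n) : Ev n :=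
  gradient (fun y => φ₀ y + ⟪Φ y, v⟫) x

/-- The Hessian `∇²ₓₓL(x̄,v)` as a linear operator. -/
def HessOp (φ₀ : Ev n → ℝ) (Φ : Ev n → Ev m) (v : Ev m) (xb : Ev n) : Ev n →L[ℝ] Ev n :=
  fderiv ℝ (gradL φ₀ Φ v) xb

/-- The Lagrange multiplier set `Λ_com(x̄)` of the composite optimization problem. -/
def LamCom (φ₀ : Ev n → ℝ) (Φ : Ev n → Ev m) (θ : CPWL m) (xb : Ev n) : Set (Ev m) :=
  {v | gradient φ₀ xb + adjD Φ xb v = 0 ∧ v ∈ θ.subdiff (Φ xb)}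

/-- Criticality of a multiplier in the composite optimization setting. -/
def IsCriticalCom (φ₀ : Ev n → ℝ) (Φ : Ev n → Ev m) (θ : CPWL m) (xb : Ev n) (v : Ev m) :
    Prop :=
  ∃ ξ : Ev n, ξ ≠ 0 ∧ ∃ w ∈ θ.Dsub (Φ xb) v (fderiv ℝ Φ xb ξ),
    HessOp φ₀ Φ v xb ξ + adjD Φ xb w = 0

/-- The solution map of the canonically perturbed KKT system of composite optimization. -/
def SKKT (φ₀ : Ev n → ℝ) (Φ : Ev n → Ev m) (θ : CPWL m) (p₁ : Ev n) (p₂ : Ev m) :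
    Set (Ev n × Ev m) :=
  {xv | gradient φ₀ xv.1 + adjD Φ xv.1 xv.2 = p₁ ∧ xv.2 ∈ θ.subdiff (Φ xv.1 + p₂)}

/-- `x̄` is a local minimizer of `φ₀ + θ∘Φ`. -/
def LocalMin (φ₀ : Ev n → ℝ) (Φ : Ev n → Ev m) (θ : CPWL m) (xb : Ev n) : Prop :=
  ∃ U ∈ 𝓝 xb, ∀ x ∈ U,
    ((φ₀ xb : ℝ) : EReal) + θ.eval (Φ xb) ≤ ((φ₀ x : ℝ) : EReal) + θ.eval (Φ x)

end Composite

section Calmness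

variable {n m : ℕ}

/-- Isolated calmness of a solution map at `((0,0), q0)`. -/
def IsolCalm (S : Ev n × Ev m → Set (Ev n × Ev m)) (q0 : Ev n × Ev m) : Prop :=
  ∃ c : ℝ, 0 ≤ c ∧ ∃ U ∈ 𝓝 (0 : Ev n × Ev m), ∃ V ∈ 𝓝 q0,
    ∀ p ∈ U, ∀ q ∈ S p ∩ V, ‖q - q0‖ ≤ c * (‖p.1‖ + ‖p.2‖)

/-- Robust isolated calmness of a solution map at `((0,0), q0)`. -/
def RobustIsolCalm (S : Ev n × Ev m → Set (Ev n × Ev m)) (q0 : Ev n × Ev m) : Prop :=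
  ∃ c : ℝ, 0 ≤ c ∧ ∃ U ∈ 𝓝 (0 : Ev n × Ev m), ∃ V ∈ 𝓝 q0,
    (∀ p ∈ U, ∀ q ∈ S p ∩ V, ‖q - q0‖ ≤ c * (‖p.1‖ + ‖p.2‖)) ∧
    (∀ p ∈ U, (S p ∩ V).Nonempty)

/-- The Lipschitz-like (Aubin) property of a solution map around `((0,0), q0)`. -/
def LipschitzLike (S : Ev n × Ev m → Set (Ev n × Ev m)) (q0 : Ev n × Ev m) : Prop :=
  ∃ c : ℝ, 0 ≤ c ∧ ∃ U ∈ 𝓝 (0 : Ev n × Ev m), ∃ V ∈ 𝓝 q0,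
    ∀ p ∈ U, ∀ p' ∈ U, ∀ q ∈ S p ∩ V, ∃ q' ∈ S p', ‖q - q'‖ ≤ c * ‖p - p'‖

end Calmness

def coneOf {m N : ℕ} (c : Fin N → Ev m) : Set (Ev m) :=
  {x | ∃ s : Fin N → ℝ, (∀ k, 0 ≤ s k) ∧ x = ∑ k, s k • c k}

lemma coneOf_succAbove_subset {m N : ℕ} (c : Fin (N+1) → Ev m) (k₀ : Fin (N+1)) :
    coneOf (c ∘ k₀.succAbove) ⊆ coneOf c := by
  rintro x ⟨s, hs, rfl⟩
  let s' : Fin (N+1) → ℝ := k₀.insertNth 0 s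
  refine ⟨s', fun k => ?_, ?_⟩
  · rcases eq_or_ne k k₀ with rfl | hne
    · simp [s']
    · obtain ⟨j, rfl⟩ := Fin.exists_succAbove_eq hne
      simpa [s'] using hs j
  · rw [Fin.sum_univ_succAbove (fun k => s' k • c k) k₀]
    simp [s']

lemma isClosed_coneOf {m N : ℕ} (c : Fin N → Ev m) : IsClosed (coneOf c) := by
  induction N with
  | zero =>
    have : coneOf c = {0} := by
      ext x; simp [coneOf, eq_comm]
    rw [this]; exact isClosed_singleton
  | succ N ih =>
    by_cases hLI : LinearIndependent ℝ c
    · let L : (Fin (N+1) → ℝ) →ₗ[ℝ] Ev m := Fintype.linearCombination ℝ c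
      have hLapp : ∀ s, L s = ∑ k, s k • c k := fun s => by
        simp [L, Fintype.linearCombination_apply]
      have hker : LinearMap.ker L = ⊥ := by
        rw [Fintype.linearIndependent_iff] at hLI
        ext s
        simp only [LinearMap.mem_ker, Submodule.mem_bot]
        constructor
        · intro h
          funext k
          exact hLI s (by rw [← hLapp]; exact h) k
        · rintro rfl; rw [hLapp]; simp
      have hemb := LinearMap.isClosedEmbedding_of_injective hker
      have horth : IsClosed {s : Fin (N+1) → ℝ | ∀ k, 0 ≤ s k} := by
        have : {s : Fin (N+1) → ℝ | ∀ k, 0 ≤ s k} = ⋂ k, {s | 0 ≤ s k} := by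
          ext s; simp
        rw [this]
        exact isClosed_iInter fun k => isClosed_le continuous_const (continuous_apply k)
      have himg : coneOf c = L '' {s | ∀ k, 0 ≤ s k} := by
        ext x
        constructor
        · rintro ⟨s, hs, rfl⟩; exact ⟨s, hs, (hLapp s).symm⟩
        · rintro ⟨s, hs, rfl⟩; exact ⟨s, hs, (hLapp s).symm⟩
      rw [himg]
      exact hemb.isClosedMap _ horth
    · rw [Fintype.not_linearIndependent_iff] at hLI
      obtain ⟨g, hg0, i₀, hgi₀⟩ := hLI
      -- wlog: there's a positive coefficient (replace g by -g if needed)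
      obtain ⟨g, hg0, i₀, hgi₀⟩ :
          ∃ g : Fin (N+1) → ℝ, ∑ i, g i • c i = 0 ∧ ∃ i₀, 0 < g i₀ := by
        rcases lt_or_gt_of_ne hgi₀ with h | h
        · exact ⟨-g, by simpa using hg0, i₀, by simpa using h⟩
        · exact ⟨g, hg0, i₀, h⟩
      classical
      have main : coneOf c = ⋃ k ∈ {k : Fin (N+1) | 0 < g k}, coneOf (c ∘ k.succAbove) := by
        ext x
        simp only [Set.mem_iUnion, Set.mem_setOf_eq]
        constructor
        · rintro ⟨s, hs, rfl⟩
          set P : Finset (Fin (N+1)) := Finset.univ.filter (fun k => 0 < g k) with hP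
          have hPne : P.Nonempty := ⟨i₀, by simp [hP, hgi₀]⟩
          obtain ⟨k₀, hk₀P, hk₀min⟩ := P.exists_min_image (fun k => s k / g k) hPne
          have hgk₀ : 0 < g k₀ := (Finset.mem_filter.mp hk₀P).2
          set lam := s k₀ / g k₀ with hlam
          have hlam0 : 0 ≤ lam := div_nonneg (hs k₀) hgk₀.le
          have hs' : ∀ k, 0 ≤ s k - lam * g k := by
            intro k
            by_cases hgk : 0 < g k
            · have hmin := hk₀min k (Finset.mem_filter.mpr ⟨Finset.mem_univ k, hgk⟩)
              rw [div_le_div_iff₀ hgk₀ hgk] at hmin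
              rw [sub_nonneg, hlam, div_mul_eq_mul_div, div_le_iff₀ hgk₀]
              linarith
            · push_neg at hgk
              have : lam * g k ≤ 0 := mul_nonpos_of_nonneg_of_nonpos hlam0 hgk
              linarith [hs k]
          have hsum : ∑ k, (s k - lam * g k) • c k = ∑ k, s k • c k := by
            rw [← sub_eq_zero]
            simp only [sub_smul, Finset.sum_sub_distrib, mul_smul]
            rw [← Finset.smul_sum, hg0]
            simp
          have hk₀zero : s k₀ - lam * g k₀ = 0 := by
            rw [hlam, div_mul_cancel₀ _ hgk₀.ne', sub_self]
          refine ⟨k₀, hgk₀, (fun j => s (k₀.succAbove j) - lam * g (k₀.succAbove j)),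
            fun j => hs' _, ?_⟩
          rw [← hsum, Fin.sum_univ_succAbove (fun k => (s k - lam * g k) • c k) k₀, hk₀zero]
          simp
        · rintro ⟨k, hk, hx⟩
          exact coneOf_succAbove_subset c k hx
      rw [main]
      exact Set.Finite.isClosed_biUnion (Set.toFinite _) (fun k _ => ih _)

lemma convex_coneOf {m N : ℕ} (c : Fin N → Ev m) : Convex ℝ (coneOf c) := by
  rintro x ⟨s, hs, rfl⟩ y ⟨r, hr, rfl⟩ a b ha hb _
  refine ⟨fun k => a * s k + b * r k,
    fun k => add_nonneg (mul_nonneg ha (hs k)) (mul_nonneg hb (hr k)), ?_⟩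
  simp only [add_smul, mul_smul, Finset.sum_add_distrib, Finset.smul_sum]

lemma smul_mem_coneOf {m N : ℕ} {c : Fin N → Ev m} {x : Ev m} (hx : x ∈ coneOf c)
    {t : ℝ} (ht : 0 ≤ t) : t • x ∈ coneOf c := by
  obtain ⟨s, hs, rfl⟩ := hx
  exact ⟨fun k => t * s k, fun k => mul_nonneg ht (hs k), by
    simp [Finset.smul_sum, mul_smul]⟩

lemma zero_mem_coneOf {m N : ℕ} (c : Fin N → Ev m) : (0 : Ev m) ∈ coneOf c :=
  ⟨0, fun k => le_rfl, by simp⟩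

lemma single_mem_coneOf {m N : ℕ} (c : Fin N → Ev m) (k : Fin N) : c k ∈ coneOf c := by
  classical
  refine ⟨fun j => if j = k then 1 else 0, fun j => by positivity, ?_⟩
  rw [Finset.sum_eq_single k] <;> simp +contextual

theorem farkas {m N : ℕ} (c : Fin N → Ev m) (w : Ev m)
    (h : ∀ y : Ev m, (∀ k, ⟪c k, y⟫ ≤ 0) → ⟪w, y⟫ ≤ 0) : w ∈ coneOf c := by
  by_contra hw
  obtain ⟨f, u, hfC, hfw⟩ :=
    geometric_hahn_banach_closed_point (convex_coneOf c) (isClosed_coneOf c) hw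
  have hu0 : 0 < u := by simpa using hfC 0 (zero_mem_coneOf c)
  have hfC0 : ∀ x ∈ coneOf c, f x ≤ 0 := by
    intro x hx
    by_contra hpos
    push_neg at hpos
    have := hfC ((u / f x) • x) (smul_mem_coneOf hx (by positivity))
    rw [map_smul, smul_eq_mul, div_mul_cancel₀ _ (ne_of_gt hpos)] at this
    exact lt_irrefl u this
  set y := (InnerProductSpace.toDual ℝ (Ev m)).symm f with hy
  have hyx : ∀ x : Ev m, ⟪y, x⟫ = f x := fun x => InnerProductSpace.toDual_symm_apply
  have hcy : ∀ k, ⟪c k, y⟫ ≤ 0 := fun k => by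
    rw [real_inner_comm, hyx]
    exact hfC0 _ (single_mem_coneOf c k)
  have := h y hcy
  rw [real_inner_comm, hyx] at this
  linarith [hfw]

/-! ### Auxiliary lemmas -/

section RayTangent

lemma ray_tangent {E : Type*} [NormedAddCommGroup E] [NormedSpace ℝ E] {S : Set E} {x w : E}
    {t1 : ℝ} (ht1 : 0 < t1) (h : ∀ t : ℝ, 0 < t → t ≤ t1 → x + t • w ∈ S) :
    w ∈ tcone S x := by
  refine ⟨fun k => x + (t1 / ((k : ℝ) + 1)) • w, fun k => ((k : ℝ) + 1) / t1, fun k => ?_,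
    fun k => ?_, ?_, ?_⟩
  · have hk : (0 : ℝ) < (k : ℝ) + 1 := by positivity
    exact h _ (by positivity) (div_le_self ht1.le (by linarith))
  · positivity
  · have : Tendsto (fun k : ℕ => t1 / ((k : ℝ) + 1)) atTop (𝓝 0) := by
      simpa [div_eq_mul_inv, one_div] using
        (tendsto_one_div_add_atTop_nhds_zero_nat.const_mul t1)
    have := (this.smul_const w).const_add x
    simpa using this
  · have : ∀ k : ℕ, (((k : ℝ) + 1) / t1) • ((x + (t1 / ((k : ℝ) + 1)) • w) - x) = w := by
      intro k
      have hk : ((k : ℝ) + 1) ≠ 0 := by positivity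
      have h1 : ((k : ℝ) + 1) / t1 * (t1 / ((k:ℝ)+1)) = 1 := by field_simp
      rw [add_sub_cancel_left, smul_smul, h1, one_smul]
    simp only [this]
    exact tendsto_const_nhds

end RayTangent

namespace CPWL

variable {m : ℕ} (θ : CPWL m)

instance : Nonempty (Fin θ.l) := ⟨⟨0, θ.hl⟩⟩

lemma le_val (z : Ev m) (i : Fin θ.l) : ⟪θ.a i, z⟫ - θ.al i ≤ θ.val z :=
  le_ciSup (f := fun i : Fin θ.l => ⟪θ.a i, z⟫ - θ.al i)
    (Set.Finite.bddAbove (Set.finite_range _)) i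

lemma exists_val_eq (z : Ev m) : ∃ i, θ.val z = ⟪θ.a i, z⟫ - θ.al i := by
  obtain ⟨i, hi⟩ := Finite.exists_max (fun i : Fin θ.l => ⟪θ.a i, z⟫ - θ.al i)
  exact ⟨i, le_antisymm (ciSup_le hi) (θ.le_val z i)⟩

/-- Linearization of the tangent cone of the domain : active constraints. -/
def Tset (zb : Ev m) : Set (Ev m) :=
  {w | ∀ j, ⟪θ.d j, zb⟫ = θ.be j → ⟪θ.d j, w⟫ ≤ 0}

open scoped Classical in
/-- The active index set as a finset. -/
def Kfin (zb : Ev m) : Finset (Fin θ.l) :=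
  Finset.univ.filter (fun i => θ.val zb = ⟪θ.a i, zb⟫ - θ.al i)

lemma Kfin_nonempty (zb : Ev m) : (θ.Kfin zb).Nonempty := by
  classical
  obtain ⟨i, hi⟩ := θ.exists_val_eq zb
  exact ⟨i, by simp [Kfin, hi]⟩

/-- The directional derivative `max_{i ∈ K} ⟨a i, w⟩`. -/
def Mfun (zb w : Ev m) : ℝ :=
  (θ.Kfin zb).sup' (θ.Kfin_nonempty zb) (fun i => ⟪θ.a i, w⟫)

lemma mem_Kfin {zb : Ev m} {i : Fin θ.l} :
    i ∈ θ.Kfin zb ↔ θ.val zb = ⟪θ.a i, zb⟫ - θ.al i := by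
  classical
  simp [Kfin]

lemma le_Mfun {zb w : Ev m} {i : Fin θ.l} (hi : i ∈ θ.Kfin zb) :
    ⟪θ.a i, w⟫ ≤ θ.Mfun zb w :=
  Finset.le_sup' (fun i => ⟪θ.a i, w⟫) hi

lemma Mfun_le {zb w : Ev m} {r : ℝ} (h : ∀ i ∈ θ.Kfin zb, ⟪θ.a i, w⟫ ≤ r) :
    θ.Mfun zb w ≤ r :=
  Finset.sup'_le _ _ h

lemma exists_Mfun_eq (zb w : Ev m) : ∃ i ∈ θ.Kfin zb, θ.Mfun zb w = ⟪θ.a i, w⟫ := by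
  obtain ⟨i, hi, h⟩ := Finset.exists_mem_eq_sup' (θ.Kfin_nonempty zb) (fun i => ⟪θ.a i, w⟫)
  exact ⟨i, hi, h⟩

/-- L2a : moving in a direction of `Tset` stays in the domain for small `t`. -/
lemma eventually_mem_dom {zb : Ev m} (hzb : zb ∈ θ.dom) {w : Ev m} (hw : w ∈ θ.Tset zb) :
    ∀ᶠ t in 𝓝[>] (0 : ℝ), zb + t • w ∈ θ.dom := by
  simp only [CPWL.dom, Set.mem_setOf_eq]
  rw [eventually_all]
  intro j
  have hinner : ∀ t : ℝ, ⟪θ.d j, zb + t • w⟫ = ⟪θ.d j, zb⟫ + t * ⟪θ.d j, w⟫ := by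
    intro t; rw [inner_add_right, real_inner_smul_right]
  rcases eq_or_lt_of_le (hzb j) with heq | hlt
  · filter_upwards [self_mem_nhdsWithin] with t ht
    have ht : (0:ℝ) < t := ht
    have := hw j heq
    rw [hinner, heq]
    nlinarith
  · have hcont : Tendsto (fun t : ℝ => ⟪θ.d j, zb⟫ + t * ⟪θ.d j, w⟫) (𝓝[>] (0:ℝ))
        (𝓝 (⟪θ.d j, zb⟫ + 0 * ⟪θ.d j, w⟫)) := by
      have hc : Continuous (fun t : ℝ => ⟪θ.d j, zb⟫ + t * ⟪θ.d j, w⟫) := by fun_prop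
      exact (hc.tendsto 0).mono_left nhdsWithin_le_nhds
    have := hcont.eventually_le_const (u := θ.be j) (by simpa using hlt)
    filter_upwards [this] with t ht
    rw [hinner]; exact ht

/-- L2b : exact first-order expansion of `val` along any ray. -/
lemma eventually_val_eq (zb w : Ev m) :
    ∀ᶠ t in 𝓝[>] (0 : ℝ),
      θ.val (zb + t • w) = θ.val zb + t * θ.Mfun zb w := by
  have hinner : ∀ i t, ⟪θ.a i, zb + t • w⟫ - θ.al i
      = (⟪θ.a i, zb⟫ - θ.al i) + t * ⟪θ.a i, w⟫ := by
    intro i t; rw [inner_add_right, real_inner_smul_right]; ring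
  have hle : ∀ᶠ t in 𝓝[>] (0:ℝ), ∀ i, ⟪θ.a i, zb + t • w⟫ - θ.al i
      ≤ θ.val zb + t * θ.Mfun zb w := by
    rw [eventually_all]
    intro i
    by_cases hi : i ∈ θ.Kfin zb
    · filter_upwards [self_mem_nhdsWithin] with t ht
      have ht : (0:ℝ) < t := ht
      have h1 := θ.le_Mfun (w := w) hi
      rw [hinner, ← (θ.mem_Kfin.mp hi)]
      nlinarith
    · have hlt : ⟪θ.a i, zb⟫ - θ.al i < θ.val zb :=
        lt_of_le_of_ne (θ.le_val zb i) (fun h => hi (θ.mem_Kfin.mpr h.symm))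
      have hcont : Tendsto (fun t : ℝ => ((⟪θ.a i, zb⟫ - θ.al i) + t * ⟪θ.a i, w⟫)
          - (θ.val zb + t * θ.Mfun zb w)) (𝓝[>] (0:ℝ))
          (𝓝 (((⟪θ.a i, zb⟫ - θ.al i) + 0 * ⟪θ.a i, w⟫) - (θ.val zb + 0 * θ.Mfun zb w))) := by
        have hc : Continuous (fun t : ℝ => ((⟪θ.a i, zb⟫ - θ.al i) + t * ⟪θ.a i, w⟫)
            - (θ.val zb + t * θ.Mfun zb w)) := by fun_prop
        exact (hc.tendsto 0).mono_left nhdsWithin_le_nhds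
      have := hcont.eventually_le_const (u := (0:ℝ))
        (by simp only [zero_mul, add_zero]; linarith)
      filter_upwards [this] with t ht
      rw [hinner]; linarith
  filter_upwards [hle, self_mem_nhdsWithin] with t ht htpos
  have htpos : (0:ℝ) < t := htpos
  refine le_antisymm (ciSup_le ht) ?_
  obtain ⟨i, hi, hMi⟩ := θ.exists_Mfun_eq zb w
  calc θ.val zb + t * θ.Mfun zb w = (⟪θ.a i, zb⟫ - θ.al i) + t * ⟪θ.a i, w⟫ := by
        rw [← θ.mem_Kfin.mp hi, hMi]
      _ = ⟪θ.a i, zb + t • w⟫ - θ.al i := (hinner i t).symm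
      _ ≤ θ.val (zb + t • w) := θ.le_val _ i

end CPWL

namespace CPWL

variable {m : ℕ} (θ : CPWL m)

lemma tcone_dom_subset_Tset (zb : Ev m) : tcone θ.dom zb ⊆ θ.Tset zb := by
  rintro u ⟨z, c, hz, hc, hzlim, hlim⟩ j hact
  have hterm : ∀ k, ⟪θ.d j, c k • (z k - zb)⟫ ≤ 0 := by
    intro k
    rw [real_inner_smul_right, inner_sub_right, hact]
    have h1 : ⟪θ.d j, z k⟫ ≤ θ.be j := hz k j
    nlinarith [hc k]
  have htend : Tendsto (fun k => ⟪θ.d j, c k • (z k - zb)⟫) atTop (𝓝 ⟪θ.d j, u⟫) :=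
    Filter.Tendsto.inner tendsto_const_nhds hlim
  exact le_of_tendsto htend (Filter.Eventually.of_forall hterm)

lemma quot_eventually_eq (zb vb w : Ev m) :
    (fun t : ℝ => (θ.val (zb + t • w) - θ.val zb) / t) =ᶠ[𝓝[>] (0:ℝ)]
      (fun _ => θ.Mfun zb w) := by
  filter_upwards [θ.eventually_val_eq zb w, self_mem_nhdsWithin] with t ht htpos
  have htpos : (0:ℝ) < t := htpos
  rw [ht]
  field_simp
  ring

lemma mem_crit_of {zb : Ev m} (vb : Ev m) (hzb : zb ∈ θ.dom) {w : Ev m} (hw : w ∈ θ.Tset zb)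
    (heq : ⟪vb, w⟫ = θ.Mfun zb w) : w ∈ θ.crit zb vb := by
  constructor
  · obtain ⟨t1, ht1, hsub⟩ :=
      mem_nhdsGT_iff_exists_Ioc_subset.mp (θ.eventually_mem_dom hzb hw)
    exact ray_tangent ht1 (fun t h1 h2 => hsub ⟨h1, h2⟩)
  · rw [heq]
    exact Tendsto.congr' (θ.quot_eventually_eq zb vb w).symm tendsto_const_nhds

lemma crit_eq {zb vb : Ev m} {w : Ev m} (hw : w ∈ θ.crit zb vb) :
    ⟪vb, w⟫ = θ.Mfun zb w :=
  tendsto_nhds_unique hw.2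
    (Tendsto.congr' (θ.quot_eventually_eq zb vb w).symm tendsto_const_nhds)

lemma inner_le_Mfun {zb vb : Ev m} (hv : vb ∈ θ.subdiff zb) {w : Ev m}
    (hw : w ∈ θ.Tset zb) : ⟪vb, w⟫ ≤ θ.Mfun zb w := by
  obtain ⟨t, ⟨hdom, hval⟩, htpos⟩ :=
    (((θ.eventually_mem_dom hv.1 hw).and (θ.eventually_val_eq zb w)).and
      self_mem_nhdsWithin).exists
  have htpos : (0:ℝ) < t := htpos
  have h := hv.2 _ hdom
  rw [add_sub_cancel_left, real_inner_smul_right, hval] at h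
  have : t * ⟪vb, w⟫ ≤ t * θ.Mfun zb w := by linarith
  exact (mul_le_mul_iff_right₀ htpos).mp this

/-- Forward direction: membership in the graphical derivative forces the
primal-dual conditions. -/
lemma Dsub_forward {zb vb : Ev m} (hv : vb ∈ θ.subdiff zb) {u w : Ev m}
    (h : w ∈ θ.Dsub zb vb u) :
    u ∈ θ.Tset zb ∧ ⟪vb, u⟫ = θ.Mfun zb u ∧ ⟪w, u⟫ = 0 ∧
      (∀ y ∈ θ.Tset zb, ⟪vb, y⟫ = θ.Mfun zb y → ⟪w, y⟫ ≤ 0) := by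
  obtain ⟨zv, c, hmem, hc, hlim1, hlim2⟩ := h
  have hz : Tendsto (fun k => (zv k).1) atTop (𝓝 zb) :=
    (continuous_fst.tendsto _).comp hlim1
  have hvs : Tendsto (fun k => (zv k).2) atTop (𝓝 vb) :=
    (continuous_snd.tendsto _).comp hlim1
  have huseq : Tendsto (fun k => c k • ((zv k).1 - zb)) atTop (𝓝 u) := by
    have := (continuous_fst.tendsto _).comp hlim2
    simpa [Function.comp_def] using this
  have hwseq : Tendsto (fun k => c k • ((zv k).2 - vb)) atTop (𝓝 w) := by
    have := (continuous_snd.tendsto _).comp hlim2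
    simpa [Function.comp_def] using this
  have huT : u ∈ θ.Tset zb :=
    θ.tcone_dom_subset_Tset zb ⟨fun k => (zv k).1, c, fun k => (hmem k).1, hc, hz, huseq⟩
  -- (b) : ⟨a i, u⟩ ≤ ⟨vb, u⟩ for all active i
  have hbi : ∀ i ∈ θ.Kfin zb, ⟪θ.a i, u⟫ ≤ ⟪vb, u⟫ := by
    intro i hi
    have hterm : ∀ k, ⟪θ.a i, c k • ((zv k).1 - zb)⟫ ≤ ⟪(zv k).2, c k • ((zv k).1 - zb)⟫ := by
      intro k
      have h1 := (hmem k).2 zb hv.1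
      have h2 : ⟪θ.a i, (zv k).1⟫ - θ.al i ≤ θ.val ((zv k).1) := θ.le_val _ i
      have h3 : θ.val zb = ⟪θ.a i, zb⟫ - θ.al i := θ.mem_Kfin.mp hi
      rw [real_inner_smul_right, real_inner_smul_right]
      apply mul_le_mul_of_nonneg_left _ (hc k)
      rw [inner_sub_right, inner_sub_right]
      have h4 : ⟪(zv k).2, zb⟫ - ⟪(zv k).2, (zv k).1⟫ ≤ θ.val zb - θ.val ((zv k).1) := by
        have := h1
        rwa [inner_sub_right] at this
      linarith
    have t1 : Tendsto (fun k => ⟪θ.a i, c k • ((zv k).1 - zb)⟫) atTop (𝓝 ⟪θ.a i, u⟫) :=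
      Filter.Tendsto.inner tendsto_const_nhds huseq
    have t2 : Tendsto (fun k => ⟪(zv k).2, c k • ((zv k).1 - zb)⟫) atTop (𝓝 ⟪vb, u⟫) :=
      Filter.Tendsto.inner hvs huseq
    exact le_of_tendsto_of_tendsto' t1 t2 hterm
  have hequ : ⟪vb, u⟫ = θ.Mfun zb u :=
    le_antisymm (θ.inner_le_Mfun hv huT) (θ.Mfun_le (fun i hi => hbi i hi))
  -- (c) : w is in the dual of the critical cone
  have hdual : ∀ y ∈ θ.Tset zb, ⟪vb, y⟫ = θ.Mfun zb y → ⟪w, y⟫ ≤ 0 := by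
    intro y hyT hyeq
    obtain ⟨τ, ⟨hdomτ, hvalτ⟩, hτpos⟩ :=
      (((θ.eventually_mem_dom hv.1 hyT).and (θ.eventually_val_eq zb y)).and
        self_mem_nhdsWithin).exists
    have hτpos : (0:ℝ) < τ := hτpos
    have key : ∀ k, τ * ⟪c k • ((zv k).2 - vb), y⟫ ≤ ⟪c k • ((zv k).2 - vb), (zv k).1 - zb⟫ := by
      intro k
      have h1 := (hmem k).2 (zb + τ • y) hdomτ
      have h2 := hv.2 ((zv k).1) (hmem k).1
      have e1 : zb + τ • y - (zv k).1 = (zb - (zv k).1) + τ • y := by abel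
      rw [e1, inner_add_right, real_inner_smul_right, hvalτ, ← hyeq] at h1
      have base : τ * ⟪(zv k).2 - vb, y⟫ ≤ ⟪(zv k).2 - vb, (zv k).1 - zb⟫ := by
        rw [inner_sub_left, inner_sub_left]
        have e2 : ⟪(zv k).2, zb - (zv k).1⟫ = -⟪(zv k).2, (zv k).1 - zb⟫ := by
          rw [← inner_neg_right, neg_sub]
        rw [e2] at h1
        nlinarith [h1, h2]
      rw [real_inner_smul_left, real_inner_smul_left]
      nlinarith [mul_le_mul_of_nonneg_left base (hc k)]
    have t1 : Tendsto (fun k => τ * ⟪c k • ((zv k).2 - vb), y⟫) atTop (𝓝 (τ * ⟪w, y⟫)) :=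
      (Filter.Tendsto.inner hwseq tendsto_const_nhds).const_mul τ
    have t2 : Tendsto (fun k => ⟪c k • ((zv k).2 - vb), (zv k).1 - zb⟫) atTop
        (𝓝 ⟪w, (0 : Ev m)⟫) := by
      apply Filter.Tendsto.inner hwseq
      have := hz.sub (tendsto_const_nhds (x := zb))
      simpa using this
    have hle : τ * ⟪w, y⟫ ≤ ⟪w, (0 : Ev m)⟫ := le_of_tendsto_of_tendsto' t1 t2 key
    rw [inner_zero_right] at hle
    nlinarith
  refine ⟨huT, hequ, ?_, hdual⟩
  -- ⟨w, u⟩ = 0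
  have hge : 0 ≤ ⟪w, u⟫ := by
    have hterm : ∀ k, (0:ℝ) ≤ ⟪c k • ((zv k).2 - vb), c k • ((zv k).1 - zb)⟫ := by
      intro k
      have h1 := (hmem k).2 zb hv.1
      have h2 := hv.2 ((zv k).1) (hmem k).1
      have base : 0 ≤ ⟪(zv k).2 - vb, (zv k).1 - zb⟫ := by
        rw [inner_sub_left, inner_sub_right, inner_sub_right]
        rw [inner_sub_right] at h1 h2
        linarith
      rw [real_inner_smul_left, real_inner_smul_right]
      exact mul_nonneg (hc k) (mul_nonneg (hc k) base)
    have t3 : Tendsto (fun k => ⟪c k • ((zv k).2 - vb), c k • ((zv k).1 - zb)⟫) atTop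
        (𝓝 ⟪w, u⟫) := Filter.Tendsto.inner hwseq huseq
    exact le_of_tendsto_of_tendsto' tendsto_const_nhds t3 hterm
  exact le_antisymm (hdual u huT hequ) hge

end CPWL

namespace CPWL

variable {m : ℕ} (θ : CPWL m)

/-- Backward direction: the primal-dual conditions imply membership in the
graphical derivative. -/
lemma Dsub_backward {zb vb : Ev m} (hv : vb ∈ θ.subdiff zb) {u w : Ev m}
    (huT : u ∈ θ.Tset zb) (hequ : ⟪vb, u⟫ = θ.Mfun zb u) (hperp : ⟪w, u⟫ = 0)
    (hdual : ∀ y ∈ θ.Tset zb, ⟪vb, y⟫ = θ.Mfun zb y → ⟪w, y⟫ ≤ 0) :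
    w ∈ θ.Dsub zb vb u := by
  classical
  set cs : Fin (θ.p + θ.l) → Ev m := Fin.append
    (fun j => if ⟪θ.d j, zb⟫ = θ.be j then θ.d j else 0)
    (fun i => if i ∈ θ.Kfin zb then θ.a i - vb else 0) with hcs
  have hfk : w ∈ coneOf cs := by
    apply farkas
    intro y hy
    apply hdual y
    · intro j hact
      have := hy (Fin.castAdd θ.l j)
      rwa [hcs, Fin.append_left, if_pos hact] at this
    · refine le_antisymm (θ.inner_le_Mfun hv ?_) (θ.Mfun_le ?_)
      · intro j hact
        have := hy (Fin.castAdd θ.l j)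
        rwa [hcs, Fin.append_left, if_pos hact] at this
      · intro i hi
        have := hy (Fin.natAdd θ.p i)
        rw [hcs, Fin.append_right, if_pos hi, inner_sub_left] at this
        linarith
  obtain ⟨s, hs, hws⟩ := hfk
  set S : ℝ := ∑ i : Fin θ.l, s (Fin.natAdd θ.p i) with hS
  have hSnn : 0 ≤ S := Finset.sum_nonneg (fun i _ => hs _)
  -- key global bound
  have keybound : ∀ z' ∈ θ.dom,
      ⟪w, z' - zb⟫ ≤ S * (θ.val z' - θ.val zb - ⟪vb, z' - zb⟫) := by
    intro z' hz'
    have hg : 0 ≤ θ.val z' - θ.val zb - ⟪vb, z' - zb⟫ := by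
      have := hv.2 z' hz'
      linarith
    have hinner : ⟪w, z' - zb⟫ = ∑ k, s k * ⟪cs k, z' - zb⟫ := by
      rw [hws, sum_inner]
      exact Finset.sum_congr rfl fun k _ => real_inner_smul_left _ _ _
    rw [hinner, Fin.sum_univ_add]
    have hdpart : ∀ j : Fin θ.p,
        s (Fin.castAdd θ.l j) * ⟪cs (Fin.castAdd θ.l j), z' - zb⟫ ≤ 0 := by
      intro j
      rw [hcs, Fin.append_left]
      by_cases hact : ⟪θ.d j, zb⟫ = θ.be j
      · rw [if_pos hact]
        have h1 : ⟪θ.d j, z'⟫ ≤ θ.be j := hz' j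
        have h2 : ⟪θ.d j, z' - zb⟫ ≤ 0 := by
          rw [inner_sub_right, hact]; linarith
        exact mul_nonpos_of_nonneg_of_nonpos (hs _) h2
      · rw [if_neg hact, inner_zero_left, mul_zero]
    have hapart : ∀ i : Fin θ.l,
        s (Fin.natAdd θ.p i) * ⟪cs (Fin.natAdd θ.p i), z' - zb⟫ ≤
          s (Fin.natAdd θ.p i) * (θ.val z' - θ.val zb - ⟪vb, z' - zb⟫) := by
      intro i
      rw [hcs, Fin.append_right]
      by_cases hi : i ∈ θ.Kfin zb
      · rw [if_pos hi]
        apply mul_le_mul_of_nonneg_left _ (hs _)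
        rw [inner_sub_left, inner_sub_right]
        have h1 : ⟪θ.a i, z'⟫ - θ.al i ≤ θ.val z' := θ.le_val _ i
        have h2 : θ.val zb = ⟪θ.a i, zb⟫ - θ.al i := θ.mem_Kfin.mp hi
        linarith
      · rw [if_neg hi, inner_zero_left, mul_zero]
        exact mul_nonneg (hs _) hg
    calc (∑ j : Fin θ.p, s (Fin.castAdd θ.l j) * ⟪cs (Fin.castAdd θ.l j), z' - zb⟫)
          + ∑ i : Fin θ.l, s (Fin.natAdd θ.p i) * ⟪cs (Fin.natAdd θ.p i), z' - zb⟫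
        ≤ 0 + ∑ i : Fin θ.l, s (Fin.natAdd θ.p i) * (θ.val z' - θ.val zb - ⟪vb, z' - zb⟫) :=
          add_le_add (Finset.sum_nonpos (fun j _ => hdpart j))
            (Finset.sum_le_sum (fun i _ => hapart i))
      _ = S * (θ.val z' - θ.val zb - ⟪vb, z' - zb⟫) := by
          rw [zero_add, ← Finset.sum_mul]
  -- choose a uniform step size
  obtain ⟨t1, ht1, hsub⟩ := mem_nhdsGT_iff_exists_Ioc_subset.mp
    ((θ.eventually_mem_dom hv.1 huT).and (θ.eventually_val_eq zb u))
  have ht1 : (0:ℝ) < t1 := ht1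
  have hS1 : (0:ℝ) < S + 1 := by linarith
  set t2 : ℝ := min t1 (1 / (S + 1)) with ht2def
  have ht2 : 0 < t2 := lt_min ht1 (by positivity)
  have hmem : ∀ t : ℝ, 0 < t → t ≤ t2 → (zb, vb) + t • (u, w) ∈ θ.gph := by
    intro t htpos htle
    obtain ⟨hdom', hval'⟩ := hsub ⟨htpos, htle.trans (min_le_left _ _)⟩
    have htS1 : t ≤ 1 / (S + 1) := htle.trans (min_le_right _ _)
    show ((zb, vb) + t • (u, w)).2 ∈ θ.subdiff ((zb, vb) + t • (u, w)).1
    have hfst : ((zb, vb) + t • (u, w)).1 = zb + t • u := rfl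
    have hsnd : ((zb, vb) + t • (u, w)).2 = vb + t • w := rfl
    rw [hfst, hsnd]
    refine ⟨hdom', fun z' hz' => ?_⟩
    have hkb := keybound z' hz'
    set g : ℝ := θ.val z' - θ.val zb - ⟪vb, z' - zb⟫ with hgdef
    have hg : 0 ≤ g := by have := hv.2 z' hz'; simp only [hgdef]; linarith
    have htS : t * S ≤ 1 := by
      calc t * S ≤ (1 / (S + 1)) * S := mul_le_mul_of_nonneg_right htS1 hSnn
        _ = S / (S + 1) := by ring
        _ ≤ 1 := by rw [div_le_one hS1]; linarith
    have hts : t * ⟪w, z' - zb⟫ ≤ g := by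
      calc t * ⟪w, z' - zb⟫ ≤ t * (S * g) := mul_le_mul_of_nonneg_left hkb htpos.le
        _ = (t * S) * g := by ring
        _ ≤ 1 * g := mul_le_mul_of_nonneg_right htS hg
        _ = g := one_mul g
    have he1 : z' - (zb + t • u) = (z' - zb) - t • u := by abel
    rw [he1]
    simp only [inner_add_left, inner_sub_right, real_inner_smul_left, real_inner_smul_right]
    rw [hval', ← hequ, hperp]
    simp only [hgdef] at hts
    rw [inner_sub_right, inner_sub_right] at hts
    nlinarith [hts]
  have : (u, w) ∈ tcone θ.gph (zb, vb) := ray_tangent ht2 hmem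
  exact this

end CPWL
/-- primal-dual characterization of critical multipliers via the critical cone. -/
theorem stmt2 {n m : ℕ} (θ : CPWL m) (f : Ev n → Ev n) (Φ : Ev n → Ev m)
    (xb : Ev n) (vb : Ev m)
    (hf : DifferentiableAt ℝ f xb) (hPhi : DifferentiableAt ℝ Φ xb)
    (hPhi2 : DifferentiableAt ℝ (fderiv ℝ Φ) xb)
    (hvb : vb ∈ Lam f Φ θ xb) :
    IsCritical f Φ θ xb vb ↔
      ∃ (ξ : Ev n) (η : Ev m), ξ ≠ 0 ∧
        gradxPsi f Φ xb vb ξ + adjD Φ xb η = 0 ∧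
        ⟪η, fderiv ℝ Φ xb ξ⟫ = 0 ∧
        fderiv ℝ Φ xb ξ ∈ θ.crit (Φ xb) vb ∧
        (∀ w ∈ θ.crit (Φ xb) vb, ⟪η, w⟫ ≤ 0) := by
  obtain ⟨-, hv⟩ := hvb
  constructor
  · rintro ⟨ξ, hξ, w, hwD, heq⟩
    obtain ⟨huT, hequ, hperp, hdual⟩ := θ.Dsub_forward hv hwD
    refine ⟨ξ, w, hξ, heq, hperp, θ.mem_crit_of vb hv.1 huT hequ, fun w' hw' => ?_⟩
    exact hdual w' (θ.tcone_dom_subset_Tset _ hw'.1) (θ.crit_eq hw')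
  · rintro ⟨ξ, η, hξ, heq, hperp, hucrit, hdual⟩
    refine ⟨ξ, hξ, η, ?_, heq⟩
    exact θ.Dsub_backward hv (θ.tcone_dom_subset_Tset _ hucrit.1) (θ.crit_eq hucrit) hperp
      (fun y hyT hyeq => hdual y (θ.mem_crit_of vb hv.1 hyT hyeq))
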